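/- With α_p(π,ε) the principal's worst-case expected utility over agent responses that are ε-approximately optimal, for any ε, ε' > 0 one has α_p(π, ε+ε') ≥ α_p(π,ε) − ε'/ε. Dually, with β_p(π,ε) the best-case utility (supremum over the same set), β_p(π, ε+ε') ≤ β_p(π,ε) + ε'/ε. -/

import Mathlib

open Finset

/-- Lemma 1: the principal's worst-case utility degrades smoothly
when the agent's slack increases from `ε` to `ε + ε'`: `α(ε+ε') ≥ α(ε) − ε'/ε`;
dually the best-case utility satisfies `β(ε+ε') ≤ β(ε) + ε'/ε`. -/
theorem alpha_beta_robustness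
    {Y R : Type*} [Fintype Y] [Fintype R] [Nonempty R]
    (U V : R → Y → ℝ)
    (hU : ∀ r y, U r y ∈ Set.Icc (0:ℝ) 1)
    (hV : ∀ r y, V r y ∈ Set.Icc (0:ℝ) 1)
    (π : Y → ℝ) (hπ0 : ∀ y, 0 ≤ π y) (hπ1 : ∑ y, π y = 1)
    (α β : ℝ → ℝ)
    (hα : ∀ e : ℝ, α e = sInf {v : ℝ | ∃ μ : R → ℝ,
        (∀ r, 0 ≤ μ r) ∧ (∑ r, μ r = 1) ∧
        (∀ r' : R, (∑ y, π y * U r' y) - (∑ y, π y * ∑ r, μ r * U r y) ≤ e) ∧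
        v = ∑ y, π y * ∑ r, μ r * V r y})
    (hβ : ∀ e : ℝ, β e = sSup {v : ℝ | ∃ μ : R → ℝ,
        (∀ r, 0 ≤ μ r) ∧ (∑ r, μ r = 1) ∧
        (∀ r' : R, (∑ y, π y * U r' y) - (∑ y, π y * ∑ r, μ r * U r y) ≤ e) ∧
        v = ∑ y, π y * ∑ r, μ r * V r y})
    (ε ε' : ℝ) (hε : 0 < ε) (hε' : 0 < ε') :
    α (ε + ε') ≥ α ε - ε' / ε ∧ β (ε + ε') ≤ β ε + ε' / ε := by
  classical
  -- abbreviations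
  set S : ℝ → Set ℝ := fun e => {v : ℝ | ∃ μ : R → ℝ,
        (∀ r, 0 ≤ μ r) ∧ (∑ r, μ r = 1) ∧
        (∀ r' : R, (∑ y, π y * U r' y) - (∑ y, π y * ∑ r, μ r * U r y) ≤ e) ∧
        v = ∑ y, π y * ∑ r, μ r * V r y} with hS
  -- expectation bounds
  have key : ∀ (W : R → Y → ℝ), (∀ r y, W r y ∈ Set.Icc (0:ℝ) 1) →
      ∀ (μ : R → ℝ), (∀ r, 0 ≤ μ r) → (∑ r, μ r = 1) →
      (0:ℝ) ≤ ∑ y, π y * ∑ r, μ r * W r y ∧ (∑ y, π y * ∑ r, μ r * W r y) ≤ 1 := by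
    intro W hW μ hμ0 hμ1
    constructor
    · apply Finset.sum_nonneg
      intro y _
      exact mul_nonneg (hπ0 y) (Finset.sum_nonneg fun r _ =>
        mul_nonneg (hμ0 r) (hW r y).1)
    · calc ∑ y, π y * ∑ r, μ r * W r y ≤ ∑ y, π y * 1 := by
            apply Finset.sum_le_sum
            intro y _
            apply mul_le_mul_of_nonneg_left _ (hπ0 y)
            calc ∑ r, μ r * W r y ≤ ∑ r, μ r * 1 :=
                  Finset.sum_le_sum fun r _ =>
                    mul_le_mul_of_nonneg_left (hW r y).2 (hμ0 r)
              _ = 1 := by simp [hμ1]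
        _ = 1 := by simp [hπ1]
  -- optimal pure response
  obtain ⟨rs, -, hrs⟩ := Finset.exists_max_image (univ : Finset R)
    (fun r => ∑ y, π y * U r y) ⟨Classical.arbitrary R, mem_univ _⟩
  -- the point mass at rs
  set μ0 : R → ℝ := fun r => if r = rs then 1 else 0 with hμ0def
  have hμ0nn : ∀ r, 0 ≤ μ0 r := by intro r; simp only [hμ0def]; split <;> norm_num
  have hμ0sum : ∑ r, μ0 r = 1 := by simp [hμ0def]
  have hμ0eval : ∀ (W : R → Y → ℝ) (y : Y), ∑ r, μ0 r * W r y = W rs y := by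
    intro W y
    simp [hμ0def, ite_mul]
  have hμ0mem : ∀ e, 0 ≤ e → (∑ y, π y * ∑ r, μ0 r * V r y) ∈ S e := by
    intro e he
    refine ⟨μ0, hμ0nn, hμ0sum, ?_, rfl⟩
    intro r'
    have := hrs r' (mem_univ _)
    simp only [hμ0eval U]
    simpa using sub_nonpos.mpr this |>.trans he
  -- mixing parameter
  set l : ℝ := ε' / (ε + ε') with hl
  have hεsum : 0 < ε + ε' := by linarith
  have hl0 : 0 ≤ l := le_of_lt (div_pos hε' hεsum)
  have h1l : 0 ≤ 1 - l := by
    have : l ≤ 1 := by rw [hl, div_le_one hεsum]; linarith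
    linarith
  have hlε : l ≤ ε' / ε := by
    rw [hl, div_le_div_iff₀ hεsum hε]; nlinarith
  have hmix : (1 - l) * (ε + ε') = ε := by
    rw [hl, sub_mul, div_mul_cancel₀ _ hεsum.ne']; ring
  -- main perturbation claim
  have claim : ∀ v ∈ S (ε + ε'), ∃ v' ∈ S ε, v - ε'/ε ≤ v' ∧ v' ≤ v + ε'/ε := by
    rintro v ⟨μ, hμnn, hμ1, hμreg, rfl⟩
    set μ' : R → ℝ := fun r => (1 - l) * μ r + l * μ0 r with hμ'def
    have hmixeval : ∀ (W : R → Y → ℝ) (y : Y),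
        ∑ r, μ' r * W r y = (1 - l) * (∑ r, μ r * W r y) + l * W rs y := by
      intro W y
      simp only [hμ'def, add_mul, Finset.sum_add_distrib, ← Finset.mul_sum, mul_assoc,
        hμ0eval W]
    have hmixexp : ∀ (W : R → Y → ℝ),
        ∑ y, π y * ∑ r, μ' r * W r y
          = (1 - l) * (∑ y, π y * ∑ r, μ r * W r y) + l * ∑ y, π y * W rs y := by
      intro W
      simp only [hmixeval W, mul_add, Finset.sum_add_distrib]
      congr 1
      · rw [Finset.mul_sum]; exact Finset.sum_congr rfl fun y _ => by ring
      · rw [Finset.mul_sum]; exact Finset.sum_congr rfl fun y _ => by ring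
    have hμ'nn : ∀ r, 0 ≤ μ' r := fun r =>
      add_nonneg (mul_nonneg h1l (hμnn r)) (mul_nonneg hl0 (hμ0nn r))
    have hμ'1 : ∑ r, μ' r = 1 := by
      simp only [hμ'def, Finset.sum_add_distrib, ← Finset.mul_sum, hμ1, hμ0sum]
      ring
    have hμ'reg : ∀ r' : R,
        (∑ y, π y * U r' y) - (∑ y, π y * ∑ r, μ' r * U r y) ≤ ε := by
      intro r'
      rw [hmixexp U]
      have h1 := hμreg r'
      have h2 := hrs r' (mem_univ _)
      nlinarith [mul_le_mul_of_nonneg_left h1 h1l, mul_le_mul_of_nonneg_left h2 hl0]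
    have hb1 := key V hV μ hμnn hμ1
    have hVrs : (0:ℝ) ≤ ∑ y, π y * V rs y ∧ (∑ y, π y * V rs y) ≤ 1 := by
      have := key V hV μ0 hμ0nn hμ0sum
      simpa [hμ0eval V] using this
    have hdl : l * (∑ y, π y * V rs y - ∑ y, π y * ∑ r, μ r * V r y) ≤ l * 1 :=
      mul_le_mul_of_nonneg_left (by linarith [hb1.1, hVrs.2]) hl0
    have hdl' : l * (-1) ≤ l * (∑ y, π y * V rs y - ∑ y, π y * ∑ r, μ r * V r y) :=
      mul_le_mul_of_nonneg_left (by linarith [hb1.2, hVrs.1]) hl0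
    refine ⟨∑ y, π y * ∑ r, μ' r * V r y, ⟨μ', hμ'nn, hμ'1, hμ'reg, rfl⟩, ?_, ?_⟩ <;>
    · rw [hmixexp V]
      nlinarith [hdl, hdl']
  -- boundedness and nonemptiness of the sets
  have hbdd : ∀ e, BddBelow (S e) ∧ BddAbove (S e) := by
    intro e
    constructor
    · exact ⟨0, by rintro v ⟨μ, h1, h2, h3, rfl⟩; exact (key V hV μ h1 h2).1⟩
    · exact ⟨1, by rintro v ⟨μ, h1, h2, h3, rfl⟩; exact (key V hV μ h1 h2).2⟩
  have hne : ∀ e, 0 ≤ e → (S e).Nonempty := fun e he => ⟨_, hμ0mem e he⟩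
  constructor
  · rw [hα (ε + ε'), hα ε, ge_iff_le]
    refine le_csInf (hne _ (by linarith)) ?_
    rintro v hv
    obtain ⟨v', hv', h1, h2⟩ := claim v hv
    have : sInf (S ε) ≤ v' := csInf_le (hbdd ε).1 hv'
    linarith
  · rw [hβ (ε + ε'), hβ ε]
    refine csSup_le (hne _ (by linarith)) ?_
    rintro v hv
    obtain ⟨v', hv', h1, h2⟩ := claim v hv
    have : v' ≤ sSup (S ε) := le_csSup (hbdd ε).2 hv'
    linarith
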